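/- Let r ≥ 1 and let n_1, ..., n_r be integers with 1 < n_1 | n_2 | ... | n_r, let G = C_{n_1} ⊕ ... ⊕ C_{n_r}, and let d', d be positive integers with d' | d and d | n_r. Then for every i, (d/d')·(n_i/gcd(d, n_i)) = B_i·(n_i/A_i) is a positive integer, and for all integers a_1, ..., a_r, the element of G whose i-th coordinate is the residue class of (d/d')·(n_i/gcd(d, n_i))·a_i modulo n_i equals 0 if and only if υ_i(d',d) divides a_i for every i ∈ {1, ..., r}. -/

import Mathlib

open scoped BigOperators

attribute [local instance] Classical.propDecidable

/-- A sequence (multiset) over `G` is zero-sumfree if no nonempty sub-multiset sums to `0`. -/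
def IsZeroSumFree {G : Type*} [AddCommGroup G] (S : Multiset G) : Prop :=
  ∀ T : Multiset G, T ≤ S → T ≠ 0 → T.sum ≠ 0

/-- A minimal zero-sum sequence: sum `0`, and no nonempty proper sub-multiset sums to `0`. -/
def IsMinimalZeroSum {G : Type*} [AddCommGroup G] (S : Multiset G) : Prop :=
  S.sum = 0 ∧ ∀ T : Multiset G, T < S → T ≠ 0 → T.sum ≠ 0

/-- The cross number of a sequence: `k(S) = Σ_{g ∈ S} 1/ord(g)`. -/
noncomputable def crossNumber {G : Type*} [AddCommGroup G] (S : Multiset G) : ℝ :=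
  (S.map fun g => (1 : ℝ) / (addOrderOf g)).sum

/-- The little cross number `k(G)`: max of `k(S)` over zero-sumfree sequences `S` over `G`. -/
noncomputable def littleCrossNumber (G : Type*) [AddCommGroup G] : ℝ :=
  sSup {x : ℝ | ∃ S : Multiset G, IsZeroSumFree S ∧ crossNumber S = x}

/-- The cross number `K(G)`: max of `k(S)` over minimal zero-sum sequences `S` over `G`. -/
noncomputable def bigCrossNumber (G : Type*) [AddCommGroup G] : ℝ :=
  sSup {x : ℝ | ∃ S : Multiset G, IsMinimalZeroSum S ∧ crossNumber S = x}

/-- The Davenport constant `D(G)`. -/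
noncomputable def davenport (G : Type*) [AddCommGroup G] : ℕ :=
  sInf {t | 1 ≤ t ∧ ∀ S : Multiset G, t ≤ Multiset.card S →
    ∃ T, T ≤ S ∧ T ≠ 0 ∧ T.sum = 0}

/-- The constant `η(G)`. -/
noncomputable def etaConst (G : Type*) [AddCommGroup G] : ℕ :=
  sInf {t | 1 ≤ t ∧ ∀ S : Multiset G, t ≤ Multiset.card S →
    ∃ T, T ≤ S ∧ T ≠ 0 ∧ Multiset.card T ≤ AddMonoid.exponent G ∧ T.sum = 0}

/-- `υ_i(d',d) = A_i / gcd(A_i, B_i)` where `A_i = gcd(d', n_i)` and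
`B_i = lcm(d, n_i)/lcm(d', n_i)`. -/
def upsilon (ni d' d : ℕ) : ℕ :=
  Nat.gcd d' ni / Nat.gcd (Nat.gcd d' ni) (Nat.lcm d ni / Nat.lcm d' ni)

/-- `k*` of `C_{n_1} ⊕ ... ⊕ C_{n_r}`, computed from the primary decomposition. -/
noncomputable def kStarTuple {r : ℕ} (n : Fin r → ℕ) : ℝ :=
  ∑ i, ∑ p ∈ (n i).primeFactors,
    ((p ^ ((n i).factorization p) : ℝ) - 1) / (p ^ ((n i).factorization p))

/-- `α(n) = Σ_{d | n} (P⁻(d) − 1)/d`. -/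
noncomputable def alphaFn (n : ℕ) : ℝ :=
  ∑ d ∈ n.divisors, ((d.minFac : ℝ) - 1) / d

/-- `β(n) = Σ_{p | n prime} (p − 1)/p`. -/
noncomputable def betaFn (n : ℕ) : ℝ :=
  ∑ p ∈ n.primeFactors, ((p : ℝ) - 1) / p

lemma key1 (n d' d : ℕ) (hn : 0 < n) (hd' : 0 < d') (hd : 0 < d) (hd'd : d' ∣ d) :
    d / d' * (n / Nat.gcd d n) = (Nat.lcm d n / Nat.lcm d' n) * (n / Nat.gcd d' n) := by
  have hg : Nat.gcd d n ∣ n := Nat.gcd_dvd_right d n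
  have hg' : Nat.gcd d' n ∣ n := Nat.gcd_dvd_right d' n
  have hL : Nat.lcm d' n ∣ Nat.lcm d n :=
    Nat.lcm_dvd (hd'd.trans (Nat.dvd_lcm_left d n)) (Nat.dvd_lcm_right d n)
  have hgp : 0 < Nat.gcd d n := Nat.gcd_pos_of_pos_right d hn
  have hgp' : 0 < Nat.gcd d' n := Nat.gcd_pos_of_pos_right d' hn
  have hLp' : 0 < Nat.lcm d' n := Nat.pos_of_ne_zero (Nat.lcm_ne_zero hd'.ne' hn.ne')
  have := Nat.gcd_mul_lcm d n
  have := Nat.gcd_mul_lcm d' n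
  have h1 : ((d / d' : ℕ) : ℚ) = (d : ℚ) / d' := Nat.cast_div hd'd (by positivity)
  have h2 : ((n / Nat.gcd d n : ℕ) : ℚ) = (n : ℚ) / (Nat.gcd d n) :=
    Nat.cast_div hg (by positivity)
  have h3 : ((n / Nat.gcd d' n : ℕ) : ℚ) = (n : ℚ) / (Nat.gcd d' n) :=
    Nat.cast_div hg' (by positivity)
  have h4 : ((Nat.lcm d n / Nat.lcm d' n : ℕ) : ℚ) = (Nat.lcm d n : ℚ) / (Nat.lcm d' n) :=
    Nat.cast_div hL (by positivity)
  have e1 : (Nat.gcd d n : ℚ) * (Nat.lcm d n : ℚ) = (d : ℚ) * n := by exact_mod_cast ‹Nat.gcd d n * Nat.lcm d n = d * n›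
  have e2 : (Nat.gcd d' n : ℚ) * (Nat.lcm d' n : ℚ) = (d' : ℚ) * n := by exact_mod_cast ‹Nat.gcd d' n * Nat.lcm d' n = d' * n›
  have : ((d / d' * (n / Nat.gcd d n) : ℕ) : ℚ) = ((Nat.lcm d n / Nat.lcm d' n * (n / Nat.gcd d' n) : ℕ) : ℚ) := by
    push_cast [h1, h2, h3, h4]
    field_simp
    linear_combination (d:ℚ) * e2 - (d':ℚ) * e1
  exact_mod_cast this

lemma key2 (n A B : ℕ) (hA : A ∣ n) (hn : 0 < n) :
    n / Nat.gcd n (B * (n / A)) = A / Nat.gcd A B := by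
  have hApos : 0 < A := Nat.pos_of_dvd_of_pos hA hn
  obtain ⟨k, rfl⟩ := hA
  have hk : 0 < k := by
    rcases Nat.eq_zero_or_pos k with rfl | h
    · simp at hn
    · exact h
  rw [Nat.mul_div_cancel_left k hApos, mul_comm A k, mul_comm B k, Nat.gcd_mul_left,
    Nat.mul_div_mul_left _ _ hk]

lemma key3 (n m : ℕ) (a : ℤ) (hn : 0 < n) :
    ((n : ℤ) ∣ (m : ℤ) * a) ↔ ((n / Nat.gcd n m : ℕ) : ℤ) ∣ a := by
  set g := Nat.gcd n m with hg
  have hgpos : 0 < g := Nat.gcd_pos_of_pos_left m hn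
  have hn' : n = g * (n / g) := (Nat.mul_div_cancel' (Nat.gcd_dvd_left n m)).symm
  have hm' : m = g * (m / g) := (Nat.mul_div_cancel' (Nat.gcd_dvd_right n m)).symm
  have hcop : Nat.Coprime (n / g) (m / g) := Nat.coprime_div_gcd_div_gcd hgpos
  constructor
  · intro h
    rw [hn', hm'] at h
    push_cast at h
    rw [mul_assoc, mul_dvd_mul_iff_left (by exact_mod_cast hgpos.ne' : (g:ℤ) ≠ 0)] at h
    have hc : IsCoprime ((n/g : ℕ) : ℤ) ((m/g : ℕ) : ℤ) := by
      rw [Int.isCoprime_iff_gcd_eq_one]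
      exact_mod_cast hcop
    exact (hc.dvd_of_dvd_mul_left h)
  · intro h
    have : ((n/g : ℕ) : ℤ) ∣ (m : ℤ) * a := Dvd.dvd.mul_left h _
    calc (n : ℤ) = (g : ℤ) * ((n/g : ℕ) : ℤ) := by exact_mod_cast hn'
    _ ∣ (m : ℤ) * a := by
        rw [hm']
        push_cast
        rw [mul_assoc]
        exact mul_dvd_mul_left _ (Dvd.dvd.mul_left h _)

theorem stmt3 (r : ℕ) (hr : 0 < r) (n : Fin r → ℕ)
    (hn : ∀ i, 1 < n i) (hdvd : ∀ i j : Fin r, i ≤ j → n i ∣ n j)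
    (d' d : ℕ) (hd' : 0 < d') (hd'd : d' ∣ d) (hdN : d ∣ n ⟨r - 1, by omega⟩) :
    (∀ i : Fin r,
      d / d' * (n i / Nat.gcd d (n i)) =
        (Nat.lcm d (n i) / Nat.lcm d' (n i)) * (n i / Nat.gcd d' (n i)) ∧
      0 < d / d' * (n i / Nat.gcd d (n i))) ∧
    (∀ a : Fin r → ℤ,
      ((fun i : Fin r =>
          ((d / d' * (n i / Nat.gcd d (n i)) : ℕ) : ZMod (n i)) * ((a i : ZMod (n i)))) =
        (0 : ∀ i : Fin r, ZMod (n i))) ↔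
      ∀ i : Fin r, (upsilon (n i) d' d : ℤ) ∣ a i) := by

  have hd : 0 < d := Nat.pos_of_dvd_of_pos hdN (by have := hn ⟨r - 1, by omega⟩; omega)
  have hne : ∀ i, 0 < n i := fun i => by have := hn i; omega
  have hid : ∀ i : Fin r, d / d' * (n i / Nat.gcd d (n i)) =
      (Nat.lcm d (n i) / Nat.lcm d' (n i)) * (n i / Nat.gcd d' (n i)) :=
    fun i => key1 (n i) d' d (hne i) hd' hd hd'd
  have hpos : ∀ i : Fin r, 0 < d / d' * (n i / Nat.gcd d (n i)) := fun i => by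
    have h1 : 0 < d / d' := Nat.div_pos (Nat.le_of_dvd hd hd'd) hd'
    have h2 : 0 < n i / Nat.gcd d (n i) :=
      Nat.div_pos (Nat.le_of_dvd (hne i) (Nat.gcd_dvd_right d (n i)))
        (Nat.gcd_pos_of_pos_right d (hne i))
    positivity
  refine ⟨fun i => ⟨hid i, hpos i⟩, fun a => ?_⟩
  rw [funext_iff]
  refine forall_congr' fun i => ?_
  haveI : NeZero (n i) := ⟨(hne i).ne'⟩
  set m := d / d' * (n i / Nat.gcd d (n i)) with hm
  have hcast : ((m : ℕ) : ZMod (n i)) * ((a i : ℤ) : ZMod (n i)) =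
      (((m : ℤ) * a i : ℤ) : ZMod (n i)) := by push_cast; ring
  rw [Pi.zero_apply, hcast, ZMod.intCast_zmod_eq_zero_iff_dvd,
    key3 (n i) m (a i) (hne i)]
  have h5 : n i / Nat.gcd (n i) m = upsilon (n i) d' d := by
    rw [hm, hid i]
    exact key2 (n i) (Nat.gcd d' (n i)) (Nat.lcm d (n i) / Nat.lcm d' (n i))
      (Nat.gcd_dvd_right _ _) (hne i)
  rw [h5]
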